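/- Let E > 0 and let (P,L) ∈ ℝ³ × ℝ³ satisfy |P|² = 2E, P·L = 0 and L₃ = m. Define the invariants of the S¹ action: b₁ = P₃/√(2E), b₂ = L₁² + L₂², b₃ = (L₁P₂ - L₂P₁)/√(2E). Then the syzygy C₃(b₁,b₂,b₃) := (1 - b₁²) b₂ - b₁² m² - b₃² = 0 holds, together with the inequalities b₂ ≥ 0 and b₁² ≤ 1. Hence the image of the reduction map lies in the semi-algebraic variety P_m = {(b₁,b₂,b₃) : C₃ = 0, b₂ ≥ 0, b₁² ≤ 1}. -/
import Mathlib


noncomputable section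

/-- The dot product in `ℝ³`. -/
def dot3 (v w : Fin 3 → ℝ) : ℝ := v 0 * w 0 + v 1 * w 1 + v 2 * w 2

/-- On the reduced phase space `|P|² = 2E`, `P·L = 0` with `L₃ = m`, the invariants
`b₁ = P₃/√(2E)`, `b₂ = L₁² + L₂²`, `b₃ = (L₁P₂ - L₂P₁)/√(2E)` of the `S¹` action
satisfy the syzygy `C₃ = (1 - b₁²)b₂ - b₁²m² - b₃² = 0` together with `b₂ ≥ 0` and
`b₁² ≤ 1`; hence the reduction map lands in the semi-algebraic variety `P_m`. -/
theorem reduction_syzygy (E m : ℝ) (hE : 0 < E) (P L : Fin 3 → ℝ)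
    (hP : dot3 P P = 2 * E) (hPL : dot3 P L = 0) (hm : L 2 = m) :
    let b₁ : ℝ := P 2 / Real.sqrt (2 * E)
    let b₂ : ℝ := (L 0) ^ 2 + (L 1) ^ 2
    let b₃ : ℝ := (L 0 * P 1 - L 1 * P 0) / Real.sqrt (2 * E)
    (1 - b₁ ^ 2) * b₂ - b₁ ^ 2 * m ^ 2 - b₃ ^ 2 = 0 ∧ 0 ≤ b₂ ∧ b₁ ^ 2 ≤ 1 := by
  intro b₁ b₂ b₃
  have h2E : (0:ℝ) < 2 * E := by linarith
  have hs : Real.sqrt (2 * E) ^ 2 = 2 * E := Real.sq_sqrt h2E.le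
  have hsne : Real.sqrt (2 * E) ≠ 0 := by positivity
  unfold dot3 at hP hPL
  refine ⟨?_, by positivity, ?_⟩
  · show (1 - (P 2 / Real.sqrt (2*E)) ^ 2) * ((L 0)^2 + (L 1)^2)
      - (P 2 / Real.sqrt (2*E)) ^ 2 * m ^ 2
      - ((L 0 * P 1 - L 1 * P 0) / Real.sqrt (2*E)) ^ 2 = 0
    rw [div_pow, div_pow, hs]
    have : P 2 * m = -(P 0 * L 0 + P 1 * L 1) := by rw [← hm]; linarith
    field_simp
    linear_combination -(L 0 ^ 2 + L 1 ^ 2) * hP + (P 0 * L 0 + P 1 * L 1 - P 2 * m) * this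
  · show (P 2 / Real.sqrt (2*E)) ^ 2 ≤ 1
    rw [div_pow, div_le_one (by positivity)]
    nlinarith [sq_nonneg (P 0), sq_nonneg (P 1)]
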